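/- Summation by parts estimate: Let $(X_n)$ be an almost increasing positive sequence, let $(b_n)$ be a sequence of nonnegative reals with $\sum_{v=1}^{m} b_v = O(X_m)$, let $(A_n)$ be a $\delta$-quasi-monotone sequence with $\sum n A_n X_n$ convergent. Then $\sum_{v=1}^{m} v |A_v| b_v = O(1)$ as $m \to \infty$. -/

import Mathlib

def AlmostIncreasing (b : ℕ → ℝ) : Prop :=
  ∃ (c : ℕ → ℝ) (A B : ℝ), 0 < A ∧ 0 < B ∧ (∀ n, 0 < c n) ∧ StrictMono c ∧
    ∀ n, A * c n ≤ b n ∧ b n ≤ B * c n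

def DeltaQuasiMonotone (A δ : ℕ → ℝ) : Prop :=
  Filter.Tendsto A Filter.atTop (nhds 0) ∧ (∀ᶠ n in Filter.atTop, 0 < A n) ∧
    ∀ n, A n - A (n + 1) ≥ -δ n

/-- Summation-by-parts estimate: if `X` is almost increasing, `b ≥ 0` with
`∑_{v≤m} b_v = O(X_m)`, and `A` is `δ`-quasi-monotone with `∑ n A_n X_n` and
`∑ n δ_n X_n` convergent, then `∑_{v=1}^m v |A_v| b_v = O(1)`. -/
theorem abel_estimate_first (X A δ b : ℕ → ℝ) (hX : AlmostIncreasing X)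
    (hb : ∀ n, 0 ≤ b n)
    (hbX : ∃ C : ℝ, ∀ m : ℕ, 1 ≤ m → (∑ v ∈ Finset.Icc 1 m, b v) ≤ C * X m)
    (hδpos : ∀ n, 0 < δ n) (hqm : DeltaQuasiMonotone A δ)
    (hAX : Summable (fun n : ℕ => (n : ℝ) * A n * X n))
    (hδX : Summable (fun n : ℕ => (n : ℝ) * δ n * X n)) :
    ∃ D : ℝ, ∀ m : ℕ, (∑ v ∈ Finset.Icc 1 m, (v : ℝ) * |A v| * b v) ≤ D := by
  obtain ⟨c, Ac, Bc, hAc, hBc, hcpos, hcmono, hc⟩ := hX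
  have hXpos : ∀ n, 0 < X n := fun n =>
    lt_of_lt_of_le (mul_pos hAc (hcpos n)) (hc n).1
  obtain ⟨C, hC⟩ := hbX
  have hCnn : 0 ≤ C := by
    have h1 := hC 1 le_rfl
    have hb1 : (0:ℝ) ≤ ∑ v ∈ Finset.Icc 1 1, b v := by
      simpa using hb 1
    nlinarith [hXpos 1]
  -- b v ≤ C * X v for 1 ≤ v
  have hbC : ∀ v : ℕ, 1 ≤ v → b v ≤ C * X v := by
    intro v hv
    refine le_trans ?_ (hC v hv)
    exact Finset.single_le_sum (fun i _ => hb i) (Finset.mem_Icc.mpr ⟨hv, le_rfl⟩)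
  set g : ℕ → ℝ := fun v => (v : ℝ) * |A v| * X v with hg_def
  have hgnn : ∀ v, 0 ≤ g v := fun v =>
    mul_nonneg (mul_nonneg (Nat.cast_nonneg v) (abs_nonneg _)) (hXpos v).le
  have hg : Summable g := by
    obtain ⟨N, hN⟩ := Filter.eventually_atTop.mp hqm.2.1
    have h1 : Summable (fun n : ℕ => ((n + N : ℕ) : ℝ) * A (n + N) * X (n + N)) :=
      (summable_nat_add_iff N).mpr hAX
    have h2 : Summable (fun n : ℕ => g (n + N)) := by
      refine h1.congr fun n => ?_
      simp only [hg_def]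
      rw [abs_of_pos (hN (n + N) (Nat.le_add_left N n))]
    exact (summable_nat_add_iff N).mp h2
  refine ⟨C * ∑' v, g v, fun m => ?_⟩
  have step1 : (∑ v ∈ Finset.Icc 1 m, (v : ℝ) * |A v| * b v) ≤
      ∑ v ∈ Finset.Icc 1 m, C * g v := by
    refine Finset.sum_le_sum fun v hv => ?_
    have hv1 : 1 ≤ v := (Finset.mem_Icc.mp hv).1
    have : (v : ℝ) * |A v| * b v ≤ (v : ℝ) * |A v| * (C * X v) :=
      mul_le_mul_of_nonneg_left (hbC v hv1)
        (mul_nonneg (Nat.cast_nonneg v) (abs_nonneg _))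
    calc (v : ℝ) * |A v| * b v ≤ (v : ℝ) * |A v| * (C * X v) := this
      _ = C * g v := by simp only [hg_def]; ring
  refine step1.trans ?_
  rw [← Finset.mul_sum]
  exact mul_le_mul_of_nonneg_left
    (Summable.sum_le_tsum _ (fun i _ => hgnn i) hg) hCnn
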